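/- Let B0 A0 A1 ... A_{m+1} B_{m+1} be a convex polygon in the hyperbolic plane with right angles at B0 and B_{m+1}. Let α_k denote the interior angle at A_k for k = 1, ..., m, and let L = |A0A1| + |A1A2| + ... + |A_m A_{m+1}|. Then the sum over k = 1 to m of (π - α_k) is at most π + L. -/

import Mathlib

open Real

/-! Hyperboloid model of the hyperbolic plane `H²` of curvature `-1`:
points are `p : ℝ × ℝ × ℝ` with `mink p p = 1` and `p.1 > 0`, where `mink` is the
Minkowski bilinear form of signature `(+,-,-)`.  Distances satisfy
`cosh (hdist p q) = mink p q` and angles are computed by the hyperbolic cosine law. -/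

/-- Minkowski bilinear form on `ℝ^{1,2}`. -/
def mink (p q : ℝ × ℝ × ℝ) : ℝ := p.1 * q.1 - p.2.1 * q.2.1 - p.2.2 * q.2.2

/-- Inverse hyperbolic cosine. -/
noncomputable def arcosh (x : ℝ) : ℝ := Real.log (x + Real.sqrt (x ^ 2 - 1))

/-- Hyperbolic distance between points of the hyperboloid. -/
noncomputable def hdist (p q : ℝ × ℝ × ℝ) : ℝ := _root_.arcosh (mink p q)

/-- Angle at `p` between the geodesic segments from `p` to `q` and from `p` to `r`. -/
noncomputable def hangle (p q r : ℝ × ℝ × ℝ) : ℝ :=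
  Real.arccos ((mink p q * mink p r - mink q r) /
    (Real.sqrt (mink p q ^ 2 - 1) * Real.sqrt (mink p r ^ 2 - 1)))

/-- The point at signed arclength `s` along the base geodesic line `{x₂ = 0}` (the "lower
line"), moved to (signed) height `h` along the perpendicular at that point. -/
noncomputable def Pt (s h : ℝ) : ℝ × ℝ × ℝ :=
  (Real.cosh s * Real.cosh h, Real.sinh s * Real.cosh h, Real.sinh h)

/-- Let `B₀ A₀ A₁ … A_{m+1} B_{m+1}` be a convex polygon in the hyperbolic plane with right
angles at `B₀` and `B_{m+1}`, where `A_i = Pt (s i) (h i)` lies at height `h i > 0` over the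
point `B_i = Pt (s i) 0` of the base line, `s` strictly increasing, and `B₀ = Pt (s 0) 0`,
`B_{m+1} = Pt (s (m+1)) 0`.  Convexity at each interior vertex `A_k` (`1 ≤ k ≤ m`) is
expressed by the interior angle `α_k` splitting as the sum of the two angles cut off by the
perpendicular `A_k B_k` (the foot lies inside the angle and the angle is at most `π`).
With `L = |A₀A₁| + ⋯ + |A_m A_{m+1}|`, we have `∑_{k=1}^m (π - α_k) ≤ π + L`. -/

private lemma cosh_aux (t : ℝ) : Real.cosh t - 1 ≤ t * Real.sinh t := by
  have hEF : Real.exp t * Real.exp (-t) = 1 := by rw [← Real.exp_add]; simp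
  have h1 : 1 + t ≤ Real.exp t := by linarith [Real.add_one_le_exp t]
  have h2 : 1 - t ≤ Real.exp (-t) := by linarith [Real.add_one_le_exp (-t)]
  have k1 : Real.exp t * (1 - t) ≤ 1 := by
    calc Real.exp t * (1 - t) ≤ Real.exp t * Real.exp (-t) :=
          mul_le_mul_of_nonneg_left h2 (Real.exp_pos t).le
      _ = 1 := hEF
  have k2 : Real.exp (-t) * (1 + t) ≤ 1 := by
    calc Real.exp (-t) * (1 + t) ≤ Real.exp (-t) * Real.exp t :=
          mul_le_mul_of_nonneg_left h1 (Real.exp_pos (-t)).le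
      _ = 1 := by rw [mul_comm]; exact hEF
  rw [Real.cosh_eq, Real.sinh_eq]
  nlinarith [k1, k2]

private lemma sin_aux (t : ℝ) (h0 : 0 ≤ t) (h2 : t ≤ π/2) : t * Real.cos t ≤ Real.sin t := by
  rcases eq_or_lt_of_le h0 with h | h0'
  · simp [← h]
  rcases eq_or_lt_of_le h2 with h | h2'
  · rw [h, Real.cos_pi_div_two, Real.sin_pi_div_two]; norm_num
  · have hc : 0 < Real.cos t := Real.cos_pos_of_mem_Ioo ⟨by linarith [Real.pi_pos], h2'⟩
    have ht := Real.lt_tan h0' h2'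
    rw [Real.tan_eq_sin_div_cos] at ht
    exact ((lt_div_iff₀ hc).1 ht).le

private lemma sinh_mul_cos_le_sin {t : ℝ} (h0 : 0 ≤ t) (hp : t ≤ π/2) :
    Real.cos t * Real.sinh t ≤ Real.sin t := by
  have hder : ∀ x : ℝ, HasDerivAt (fun y => Real.sin y - Real.cos y * Real.sinh y)
      (Real.cos x - (-Real.sin x * Real.sinh x + Real.cos x * Real.cosh x)) x := fun x =>
    (Real.hasDerivAt_sin x).sub ((Real.hasDerivAt_cos x).mul (Real.hasDerivAt_sinh x))
  have mono : MonotoneOn (fun x => Real.sin x - Real.cos x * Real.sinh x) (Set.Icc 0 (π/2)) := by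
    apply monotoneOn_of_deriv_nonneg (convex_Icc _ _)
    · exact Continuous.continuousOn (by continuity)
    · intro x _
      exact (hder x).differentiableAt.differentiableWithinAt
    · intro x hx
      rw [interior_Icc] at hx
      rw [(hder x).deriv]
      obtain ⟨hx0, hx2⟩ := hx
      have hc : 0 ≤ Real.cos x := Real.cos_nonneg_of_mem_Icc ⟨by linarith [Real.pi_pos], hx2.le⟩
      have hsg := sin_aux x hx0.le hx2.le
      have hch := cosh_aux x
      have hsh : 0 ≤ Real.sinh x := Real.sinh_nonneg_iff.2 hx0.le
      nlinarith [mul_le_mul_of_nonneg_right hsg hsh, mul_le_mul_of_nonneg_left hch hc]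
  have hmem0 : (0:ℝ) ∈ Set.Icc (0:ℝ) (π/2) := Set.mem_Icc.2 ⟨le_refl 0, by positivity⟩
  have hmemt : t ∈ Set.Icc (0:ℝ) (π/2) := Set.mem_Icc.2 ⟨h0, hp⟩
  have h := mono hmem0 hmemt h0
  simp only [Real.sin_zero, Real.cos_zero, Real.sinh_zero, mul_zero, sub_zero, one_mul] at h
  linarith

private lemma arcsin_le_arsinh (x y : ℝ) (hx0 : 0 ≤ x) (hx1 : x < 1)
    (hxy : x ≤ y * Real.sqrt (1 - x^2)) : Real.arcsin x ≤ Real.arsinh y := by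
  have ht0 : 0 ≤ Real.arcsin x := Real.arcsin_nonneg.2 hx0
  have ht2 : Real.arcsin x ≤ π/2 := Real.arcsin_le_pi_div_two x
  have h1 := sinh_mul_cos_le_sin ht0 ht2
  rw [Real.sin_arcsin (by linarith) hx1.le, Real.cos_arcsin] at h1
  have hs : 0 < Real.sqrt (1 - x^2) := Real.sqrt_pos.2 (by nlinarith)
  have hsy : Real.sinh (Real.arcsin x) ≤ y := by nlinarith [h1, hxy, hs]
  calc Real.arcsin x = Real.arsinh (Real.sinh (Real.arcsin x)) := (Real.arsinh_sinh _).symm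
    _ ≤ Real.arsinh y := Real.arsinh_le_arsinh.2 hsy



private lemma sq_step (Q W X c r : ℝ) (hr2 : r^2 = Q) (hQQ : Q^2 = X + W^2)
    (h9 : Q^2 ≤ (c*W)^2) (hcQ : c^2 = Q + 1) : X ≤ (r*W)^2 := by
  have e : (r*W)^2 - X = (c*W)^2 - Q^2 := by
    linear_combination W^2*hr2 + hQQ - W^2*hcQ
  linarith [e, h9]

set_option maxHeartbeats 1000000 in
private lemma trap_mixed (a a' b b' D sd : ℝ)
    (ha' : 0 < a') (hb' : 0 < b') (hsd : 0 < sd)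
    (ha0 : 0 < a) (hb0 : 0 < b) (hD0 : 0 < D)
    (ha : a^2 = 1 + a'^2) (hb : b^2 = 1 + b'^2) (hD : D^2 = 1 + sd^2)
    (hu : D*a'*b < a*b') :
    Real.arcsin ((D*a'*b - a*b') / Real.sqrt ((D*a*b - a'*b')^2 - 1))
      + Real.arcsin ((D*a*b' - a'*b) / Real.sqrt ((D*a*b - a'*b')^2 - 1))
      ≤ Real.arsinh (Real.sqrt ((D*a*b - a'*b')^2 - 1)) := by
  have hD1 : 1 < D := by nlinarith
  have haa : a' < a := by nlinarith
  have hbb : b' < b := by nlinarith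
  have hab1 : 1 + a'*b' ≤ a*b := by nlinarith [sq_nonneg (a' - b'), mul_pos ha0 hb0, mul_pos ha' hb']
  have hc1 : 1 < D*a*b - a'*b' := by
    nlinarith [mul_pos ha0 hb0, mul_pos (sub_pos.2 hD1) (mul_pos ha0 hb0)]
  have hQ : 0 < (D*a*b - a'*b')^2 - 1 := by nlinarith
  have hr : 0 < Real.sqrt ((D*a*b - a'*b')^2 - 1) := Real.sqrt_pos.2 hQ
  have hr2 : (Real.sqrt ((D*a*b - a'*b')^2 - 1))^2 = (D*a*b - a'*b')^2 - 1 := Real.sq_sqrt hQ.le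
  set r := Real.sqrt ((D*a*b - a'*b')^2 - 1) with hr_def
  have hQu : (D*a*b - a'*b')^2 - 1 = (D*a'*b - a*b')^2 + b^2*sd^2 := by
    linear_combination (D^2*b^2 - b'^2) * ha + b^2*hD + hb
  have hQv : (D*a*b - a'*b')^2 - 1 = (D*a*b' - a'*b)^2 + a^2*sd^2 := by
    linear_combination (D^2*a^2 - a'^2) * hb + a^2*hD + ha
  have hbsd : 0 < b*sd := mul_pos hb0 hsd
  have hasd : 0 < a*sd := mul_pos ha0 hsd
  have hu2 : (D*a'*b - a*b')^2 < r^2 := by rw [hr2, hQu]; nlinarith [mul_pos hbsd hbsd]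
  have hv2 : (D*a*b' - a'*b)^2 < r^2 := by rw [hr2, hQv]; nlinarith [mul_pos hasd hasd]
  have hv0 : 0 ≤ D*a*b' - a'*b := by
    by_contra hcon
    push_neg at hcon
    have hm : (D*a'*b)*(D*a*b') < (a*b')*(a'*b) :=
      mul_lt_mul'' hu (by linarith) (by positivity) (by positivity)
    nlinarith [mul_pos (mul_pos ha0 ha') (mul_pos hb0 hb')]
  set p := (D*a'*b - a*b')/r with hp_def
  set q := (D*a*b' - a'*b)/r with hq_def
  have hpneg : p < 0 := div_neg_of_neg_of_pos (by linarith) hr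
  have hpgt : -1 < p := by rw [hp_def, lt_div_iff₀ hr]; nlinarith [hu2, hr, sq_nonneg (r + (D*a'*b - a*b'))]
  have hq0 : 0 ≤ q := div_nonneg hv0 hr.le
  have hq1 : q < 1 := by rw [hq_def, div_lt_one hr]; nlinarith [hv2, hr, sq_nonneg (r - (D*a*b' - a'*b))]
  have hsq1 : Real.sqrt (1 - p^2) = b*sd/r := by
    rw [show 1 - p^2 = (b*sd/r)^2 by
      rw [hp_def, div_pow, div_pow, hr2, hQu]; field_simp; ring]
    exact Real.sqrt_sq (by positivity)
  have hsq2 : Real.sqrt (1 - q^2) = a*sd/r := by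
    rw [show 1 - q^2 = (a*sd/r)^2 by
      rw [hq_def, div_pow, div_pow, hr2, hQv]; field_simp; ring]
    exact Real.sqrt_sq (by positivity)
  rcases le_or_gt (Real.arcsin p + Real.arcsin q) 0 with hS | hS
  · exact hS.trans (Real.arsinh_nonneg_iff.2 hr.le)
  have hS2 : Real.arcsin p + Real.arcsin q < π/2 := by
    have h1 : Real.arcsin p ≤ 0 := Real.arcsin_nonpos.2 hpneg.le
    have h2 : Real.arcsin q < π/2 := Real.arcsin_lt_pi_div_two.2 hq1
    linarith
  set S := Real.arcsin p + Real.arcsin q with hS_def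
  have hsin : Real.sin S = p * (a*sd/r) + b*sd/r * q := by
    rw [hS_def, Real.sin_add, Real.sin_arcsin (by linarith) (by linarith),
      Real.sin_arcsin (by linarith) hq1.le, Real.cos_arcsin, Real.cos_arcsin, hsq1, hsq2]
  have hcos : Real.cos S = b*sd/r * (a*sd/r) - p*q := by
    rw [hS_def, Real.cos_add, Real.cos_arcsin, Real.cos_arcsin, hsq1, hsq2,
      Real.sin_arcsin (by linarith) (by linarith), Real.sin_arcsin (by linarith) hq1.le]
  have hcosp : 0 < Real.cos S := Real.cos_pos_of_mem_Ioo ⟨by linarith [Real.pi_pos], hS2⟩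
  have hsinp : 0 < Real.sin S := Real.sin_pos_of_pos_of_lt_pi hS (by linarith [Real.pi_pos])
  have hsc := Real.sin_sq_add_cos_sq S
  -- key polynomial inequality chain
  have hE : (D*a*b - a'*b')*(D*a*b' - a'*b) + (D*a'*b - a*b') - sd^2*(a'*b)
      = a*b'*(D*(D*a*b - a'*b') - 1) - D*a'*b*(D*(D*a*b - a'*b') - 1)
        + a'*b*(((D*a*b - a'*b') - 1)*(D^2 - 1)) := by linear_combination (a'*b) * hD
  have hDc : 1 < D*(D*a*b - a'*b') := by
    have h := mul_lt_mul'' hD1 hc1 zero_le_one zero_le_one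
    linarith only [h]
  have h5 : D*a'*b*(D*(D*a*b - a'*b') - 1) ≤ a*b'*(D*(D*a*b - a'*b') - 1) :=
    mul_le_mul_of_nonneg_right hu.le (by linarith)
  have h8 : 0 ≤ a'*b*(((D*a*b - a'*b') - 1)*(D^2 - 1)) :=
    mul_nonneg (mul_nonneg ha'.le hb0.le) (mul_nonneg (by linarith only [hc1])
      (by have h := mul_lt_mul'' hD1 hD1 zero_le_one zero_le_one; linarith only [h]))
  have key1 : 0 ≤ (D*a*b - a'*b')*(D*a*b' - a'*b) + (D*a'*b - a*b') - sd^2*(a'*b) := by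
    rw [hE]; linarith
  have hca3 : (D*a*b - a'*b')*a*b*sd^2 - b^2*sd^2
      = sd^2*b^2*(D-1) + sd^2*(a'*(D*a'*b - a*b'))*b := by
    linear_combination (D*b^2*sd^2) * ha
  have h6 : 0 ≤ (-(D*a'*b - a*b'))
      * ((D*a*b - a'*b')*(D*a*b' - a'*b) + (D*a'*b - a*b') - sd^2*(a'*b)) :=
    mul_nonneg (by linarith) key1
  have h7 : 0 ≤ sd^2*b^2*(D-1) := mul_nonneg (mul_nonneg (sq_nonneg sd) (sq_nonneg b)) (by linarith)
  have hEq : (D*a*b - a'*b') * (a*b*sd^2 - (D*a'*b - a*b')*(D*a*b' - a'*b))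
        - ((D*a*b - a'*b')^2 - 1)
      = sd^2*b^2*(D-1)
        + (-(D*a'*b - a*b'))
          * ((D*a*b - a'*b')*(D*a*b' - a'*b) + (D*a'*b - a*b') - sd^2*(a'*b)) := by
    linear_combination hca3 - hQu
  have hQW : (D*a*b - a'*b')^2 - 1
      ≤ (D*a*b - a'*b') * (a*b*sd^2 - (D*a'*b - a*b')*(D*a*b' - a'*b)) := by
    rw [← sub_nonneg, hEq]
    exact add_nonneg h7 h6
  have hW : 0 < a*b*sd^2 - (D*a'*b - a*b')*(D*a*b' - a'*b) := by
    have t1 := mul_pos (mul_pos ha0 hb0) (mul_pos hsd hsd)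
    have t2 := mul_nonneg (by linarith only [hu] : (0:ℝ) ≤ -(D*a'*b - a*b')) hv0
    linarith only [t1, t2]
  have lag : ((D*a'*b - a*b')^2 + b^2*sd^2) * ((D*a*b' - a'*b)^2 + a^2*sd^2)
      = sd^2*(a*(D*a'*b - a*b') + b*(D*a*b' - a'*b))^2
        + (a*b*sd^2 - (D*a'*b - a*b')*(D*a*b' - a'*b))^2 := by ring
  have goal' : sd*(a*(D*a'*b - a*b') + b*(D*a*b' - a'*b))
      ≤ r * (a*b*sd^2 - (D*a'*b - a*b')*(D*a*b' - a'*b)) := by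
    rcases le_or_gt (sd*(a*(D*a'*b - a*b') + b*(D*a*b' - a'*b))) 0 with hz | hz
    · exact hz.trans (mul_pos hr hW).le
    · have h9 : ((D*a*b - a'*b')^2 - 1)^2
          ≤ ((D*a*b - a'*b') * (a*b*sd^2 - (D*a'*b - a*b')*(D*a*b' - a'*b)))^2 :=
        pow_le_pow_left₀ hQ.le hQW 2
      have hQQ : ((D*a*b - a'*b')^2 - 1)^2
          = sd^2*(a*(D*a'*b - a*b') + b*(D*a*b' - a'*b))^2
            + (a*b*sd^2 - (D*a'*b - a*b')*(D*a*b' - a'*b))^2 := by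
        linear_combination (((D*a*b - a'*b')^2 - 1)) * hQv
          + ((D*a*b' - a'*b)^2 + a^2*sd^2) * hQu
      have hsq : (sd*(a*(D*a'*b - a*b') + b*(D*a*b' - a'*b)))^2
          ≤ (r * (a*b*sd^2 - (D*a'*b - a*b')*(D*a*b' - a'*b)))^2 := by
        refine sq_step ((D*a*b - a'*b')^2 - 1) _ _ (D*a*b - a'*b') r hr2 ?_ h9 (by ring)
        linear_combination hQQ
      exact (pow_le_pow_iff_left₀ hz.le (mul_pos hr hW).le two_ne_zero).1 hsq
  have hkey : Real.sin S ≤ r * Real.cos S := by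
    rw [hsin, hcos]
    have e1 : p * (a*sd/r) + b*sd/r * q
        = sd*(a*(D*a'*b - a*b') + b*(D*a*b' - a'*b))/r^2 := by
      rw [hp_def, hq_def]; field_simp
    have e2 : r * (b*sd/r * (a*sd/r) - p*q)
        = r * (a*b*sd^2 - (D*a'*b - a*b')*(D*a*b' - a'*b))/r^2 := by
      rw [hp_def, hq_def]; field_simp
    rw [e1, e2]
    exact (div_le_div_iff_of_pos_right (by positivity)).2 goal'
  have hz2 : Real.sin S < 1 := by
    have h2 : Real.sin S ^ 2 < 1 := by linarith only [hsc, mul_pos hcosp hcosp]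
    rcases lt_or_eq_of_le (Real.sin_le_one S) with h | h
    · exact h
    · rw [h] at h2; norm_num at h2
  have hcond : Real.sin S ≤ r * Real.sqrt (1 - Real.sin S^2) := by
    rw [show 1 - Real.sin S^2 = Real.cos S^2 by linarith, Real.sqrt_sq hcosp.le]
    exact hkey
  have hfin := arcsin_le_arsinh (Real.sin S) r hsinp.le hz2 hcond
  calc S = Real.arcsin (Real.sin S) := (Real.arcsin_sin (by linarith) (by linarith)).symm
    _ ≤ Real.arsinh r := hfin

set_option maxHeartbeats 1000000 in
private lemma trap_core (a a' b b' D sd : ℝ)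
    (ha' : 0 < a') (hb' : 0 < b') (hsd : 0 < sd)
    (ha0 : 0 < a) (hb0 : 0 < b) (hD0 : 0 < D)
    (ha : a^2 = 1 + a'^2) (hb : b^2 = 1 + b'^2) (hD : D^2 = 1 + sd^2) :
    Real.arcsin ((D*a'*b - a*b') / Real.sqrt ((D*a*b - a'*b')^2 - 1))
      + Real.arcsin ((D*a*b' - a'*b) / Real.sqrt ((D*a*b - a'*b')^2 - 1))
      ≤ Real.arsinh (Real.sqrt ((D*a*b - a'*b')^2 - 1)) := by
  rcases lt_or_ge (D*a'*b) (a*b') with hu | hu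
  · exact trap_mixed a a' b b' D sd ha' hb' hsd ha0 hb0 hD0 ha hb hD hu
  rcases lt_or_ge (D*a*b') (a'*b) with hv | hv
  · have H := trap_mixed b b' a a' D sd hb' ha' hsd hb0 ha0 hD0 hb ha hD
      (by rw [show D*b'*a = D*a*b' by ring, show b*a' = a'*b by ring]; exact hv)
    rw [show D*b'*a - b*a' = D*a*b' - a'*b by ring, show D*b*a' - b'*a = D*a'*b - a*b' by ring,
      show D*b*a - b'*a' = D*a*b - a'*b' by ring] at H
    linarith [H]
  · -- both numerators nonneg
    have hD1 : 1 < D := by nlinarith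
    have haa : a' < a := by nlinarith
    have hbb : b' < b := by nlinarith
    have hab1 : 1 + a'*b' ≤ a*b := by
      nlinarith [sq_nonneg (a' - b'), mul_pos ha0 hb0, mul_pos ha' hb']
    have hc1 : 1 < D*a*b - a'*b' := by
      nlinarith [mul_pos ha0 hb0, mul_pos (sub_pos.2 hD1) (mul_pos ha0 hb0)]
    have hQ : 0 < (D*a*b - a'*b')^2 - 1 := by nlinarith
    have hr : 0 < Real.sqrt ((D*a*b - a'*b')^2 - 1) := Real.sqrt_pos.2 hQ
    have hr2 : (Real.sqrt ((D*a*b - a'*b')^2 - 1))^2 = (D*a*b - a'*b')^2 - 1 :=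
      Real.sq_sqrt hQ.le
    set r := Real.sqrt ((D*a*b - a'*b')^2 - 1) with hr_def
    have hQu : (D*a*b - a'*b')^2 - 1 = (D*a'*b - a*b')^2 + b^2*sd^2 := by
      linear_combination (D^2*b^2 - b'^2) * ha + b^2*hD + hb
    have hQv : (D*a*b - a'*b')^2 - 1 = (D*a*b' - a'*b)^2 + a^2*sd^2 := by
      linear_combination (D^2*a^2 - a'^2) * hb + a^2*hD + ha
    have hbsd : 0 < b*sd := mul_pos hb0 hsd
    have hasd : 0 < a*sd := mul_pos ha0 hsd
    have hu2 : (D*a'*b - a*b')^2 < r^2 := by rw [hr2, hQu]; nlinarith [mul_pos hbsd hbsd]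
    have hv2 : (D*a*b' - a'*b)^2 < r^2 := by rw [hr2, hQv]; nlinarith [mul_pos hasd hasd]
    have hu0 : 0 ≤ D*a'*b - a*b' := by linarith
    have hv0 : 0 ≤ D*a*b' - a'*b := by linarith
    have hp1 : (D*a'*b - a*b')/r < 1 := by
      rw [div_lt_one hr]; nlinarith [hu2, hr, sq_nonneg (r - (D*a'*b - a*b'))]
    have hq1 : (D*a*b' - a'*b)/r < 1 := by
      rw [div_lt_one hr]; nlinarith [hv2, hr, sq_nonneg (r - (D*a*b' - a'*b))]
    have hx1 : Real.arcsin ((D*a'*b - a*b')/r) ≤ Real.arsinh ((D*a'*b - a*b')/(b*sd)) := by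
      apply arcsin_le_arsinh _ _ (div_nonneg hu0 hr.le) hp1
      rw [show 1 - ((D*a'*b - a*b')/r)^2 = (b*sd/r)^2 by
        rw [div_pow, div_pow, hr2, hQu]; field_simp; ring]
      rw [Real.sqrt_sq (by positivity)]
      rw [show (D*a'*b - a*b')/(b*sd) * (b*sd/r) = (D*a'*b - a*b')/r by
        field_simp]
    have hx2 : Real.arcsin ((D*a*b' - a'*b)/r) ≤ Real.arsinh ((D*a*b' - a'*b)/(a*sd)) := by
      apply arcsin_le_arsinh _ _ (div_nonneg hv0 hr.le) hq1
      rw [show 1 - ((D*a*b' - a'*b)/r)^2 = (a*sd/r)^2 by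
        rw [div_pow, div_pow, hr2, hQv]; field_simp; ring]
      rw [Real.sqrt_sq (by positivity)]
      rw [show (D*a*b' - a'*b)/(a*sd) * (a*sd/r) = (D*a*b' - a'*b)/r by
        field_simp]
    have hsum : Real.arsinh ((D*a'*b - a*b')/(b*sd)) + Real.arsinh ((D*a*b' - a'*b)/(a*sd))
        ≤ Real.arsinh r := by
      rw [← Real.arsinh_sinh (Real.arsinh ((D*a'*b - a*b')/(b*sd))
        + Real.arsinh ((D*a*b' - a'*b)/(a*sd)))]
      apply Real.arsinh_le_arsinh.2
      rw [Real.sinh_add, Real.sinh_arsinh, Real.sinh_arsinh, Real.cosh_arsinh,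
        Real.cosh_arsinh]
      rw [show Real.sqrt (1 + ((D*a'*b - a*b')/(b*sd))^2) = r/(b*sd) by
        rw [show 1 + ((D*a'*b - a*b')/(b*sd))^2 = (r/(b*sd))^2 by
          rw [div_pow, div_pow, hr2, hQu]; field_simp; ring]
        exact Real.sqrt_sq (by positivity)]
      rw [show Real.sqrt (1 + ((D*a*b' - a'*b)/(a*sd))^2) = r/(a*sd) by
        rw [show 1 + ((D*a*b' - a'*b)/(a*sd))^2 = (r/(a*sd))^2 by
          rw [div_pow, div_pow, hr2, hQv]; field_simp; ring]
        exact Real.sqrt_sq (by positivity)]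
      have huv : (D*a'*b - a*b') + (D*a*b' - a'*b) ≤ a*b*sd^2 := by
        have t1 := mul_nonneg (mul_nonneg (by linarith : (0:ℝ) ≤ D - 1) hb0.le)
          (by linarith : (0:ℝ) ≤ a - a')
        have t2 := mul_nonneg (mul_nonneg (by linarith : (0:ℝ) ≤ D - 1) ha0.le)
          (by linarith : (0:ℝ) ≤ b - b')
        have t3 := mul_nonneg (mul_nonneg (by linarith : (0:ℝ) ≤ D - 1)
          (by linarith : (0:ℝ) ≤ D - 1)) (mul_pos ha0 hb0).le
        have e : a*b*sd^2 - ((D*a'*b - a*b') + (D*a*b' - a'*b))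
            = (D-1)*b*(a-a') + (D-1)*a*(b-b') + (D-1)*(D-1)*(a*b) := by
          linear_combination (-(a*b))*hD
        linarith only [t1, t2, t3, e]
      rw [div_mul_div_comm, div_mul_div_comm, ← add_div, div_le_iff₀ (by positivity)]
      have := mul_le_mul_of_nonneg_left huv hr.le
      nlinarith [this]
    calc Real.arcsin ((D*a'*b - a*b')/r) + Real.arcsin ((D*a*b' - a'*b)/r)
        ≤ Real.arsinh ((D*a'*b - a*b')/(b*sd)) + Real.arsinh ((D*a*b' - a'*b)/(a*sd)) :=
          add_le_add hx1 hx2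
      _ ≤ Real.arsinh r := hsum

set_option maxHeartbeats 1000000 in
private lemma trap (s1 s2 h1 h2 : ℝ) (hs : s1 < s2) (hh1 : 0 < h1) (hh2 : 0 < h2) :
    π - hangle (Pt s1 h1) (Pt s1 0) (Pt s2 h2) - hangle (Pt s2 h2) (Pt s1 h1) (Pt s2 0)
      ≤ hdist (Pt s1 h1) (Pt s2 h2) := by
  set a := Real.cosh h1 with ha_def
  set a' := Real.sinh h1 with ha'_def
  set b := Real.cosh h2 with hb_def
  set b' := Real.sinh h2 with hb'_def
  set D := Real.cosh (s2 - s1) with hD_def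
  set sd := Real.sinh (s2 - s1) with hsd_def
  have ha' : 0 < a' := by rw [ha'_def]; exact Real.sinh_pos_iff.2 hh1
  have hb' : 0 < b' := by rw [hb'_def]; exact Real.sinh_pos_iff.2 hh2
  have hsd : 0 < sd := by rw [hsd_def]; exact Real.sinh_pos_iff.2 (by linarith)
  have ha0 : 0 < a := by rw [ha_def]; exact Real.cosh_pos _
  have hb0 : 0 < b := by rw [hb_def]; exact Real.cosh_pos _
  have hD0 : 0 < D := by rw [hD_def]; exact Real.cosh_pos _
  have ha : a^2 = 1 + a'^2 := by rw [ha_def, ha'_def, Real.cosh_sq]; ring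
  have hb : b^2 = 1 + b'^2 := by rw [hb_def, hb'_def, Real.cosh_sq]; ring
  have hD : D^2 = 1 + sd^2 := by rw [hD_def, hsd_def, Real.cosh_sq]; ring
  have hc1 : 1 < D*a*b - a'*b' := by
    have hD1 : 1 < D := by nlinarith
    nlinarith [sq_nonneg (a' - b'), mul_pos ha0 hb0, mul_pos ha' hb',
      mul_pos (sub_pos.2 hD1) (mul_pos ha0 hb0)]
  have hQ : 0 < (D*a*b - a'*b')^2 - 1 := by nlinarith
  have m_c : mink (Pt s1 h1) (Pt s2 h2) = D*a*b - a'*b' := by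
    simp only [mink, Pt, hD_def, ha_def, hb_def, ha'_def, hb'_def]
    rw [Real.cosh_sub]; ring
  have m_c' : mink (Pt s2 h2) (Pt s1 h1) = D*a*b - a'*b' := by
    simp only [mink, Pt, hD_def, ha_def, hb_def, ha'_def, hb'_def]
    rw [Real.cosh_sub]; ring
  have m_a : mink (Pt s1 h1) (Pt s1 0) = a := by
    simp only [mink, Pt, Real.cosh_zero, Real.sinh_zero, ha_def]
    linear_combination Real.cosh h1 * Real.cosh_sq_sub_sinh_sq s1
  have m_b : mink (Pt s2 h2) (Pt s2 0) = b := by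
    simp only [mink, Pt, Real.cosh_zero, Real.sinh_zero, hb_def]
    linear_combination Real.cosh h2 * Real.cosh_sq_sub_sinh_sq s2
  have m_Db : mink (Pt s1 0) (Pt s2 h2) = D*b := by
    simp only [mink, Pt, Real.cosh_zero, Real.sinh_zero, hD_def, hb_def]
    rw [Real.cosh_sub]; ring
  have m_Da : mink (Pt s1 h1) (Pt s2 0) = D*a := by
    simp only [mink, Pt, Real.cosh_zero, Real.sinh_zero, hD_def, ha_def]
    rw [Real.cosh_sub]; ring
  have sq_a : Real.sqrt (a^2 - 1) = a' := by
    rw [show a^2 - 1 = a'^2 by linarith]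
    exact Real.sqrt_sq ha'.le
  have sq_b : Real.sqrt (b^2 - 1) = b' := by
    rw [show b^2 - 1 = b'^2 by linarith]
    exact Real.sqrt_sq hb'.le
  have e_ang1 : hangle (Pt s1 h1) (Pt s1 0) (Pt s2 h2)
      = Real.arccos ((D*a'*b - a*b') / Real.sqrt ((D*a*b - a'*b')^2 - 1)) := by
    rw [hangle, m_a, m_c, m_Db, sq_a]
    congr 1
    rw [show a*(D*a*b - a'*b') - D*b = a'*(D*a'*b - a*b') by linear_combination (D*b)*ha]
    rw [mul_div_mul_left _ _ (ne_of_gt ha')]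
  have e_ang2 : hangle (Pt s2 h2) (Pt s1 h1) (Pt s2 0)
      = Real.arccos ((D*a*b' - a'*b) / Real.sqrt ((D*a*b - a'*b')^2 - 1)) := by
    rw [hangle, m_c', m_b, m_Da, sq_b]
    congr 1
    rw [show (D*a*b - a'*b')*b - D*a = b'*(D*a*b' - a'*b) by linear_combination (D*a)*hb]
    rw [mul_comm (Real.sqrt ((D*a*b - a'*b')^2 - 1)) b',
      mul_div_mul_left _ _ (ne_of_gt hb')]
  have e_dist : hdist (Pt s1 h1) (Pt s2 h2)
      = Real.arsinh (Real.sqrt ((D*a*b - a'*b')^2 - 1)) := by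
    rw [hdist, m_c, _root_.arcosh, Real.arsinh]
    rw [Real.sq_sqrt hQ.le]
    rw [show 1 + ((D*a*b - a'*b')^2 - 1) = (D*a*b - a'*b')^2 by ring]
    rw [Real.sqrt_sq (by linarith)]
    rw [add_comm]
  rw [e_ang1, e_ang2, e_dist, Real.arccos_eq_pi_div_two_sub_arcsin,
    Real.arccos_eq_pi_div_two_sub_arcsin]
  have := trap_core a a' b b' D sd ha' hb' hsd ha0 hb0 hD0 ha hb hD
  linarith [this]

private lemma hangle_le_pi (p q r : ℝ × ℝ × ℝ) : hangle p q r ≤ π := by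
  rw [hangle]; exact Real.arccos_le_pi _

theorem convex_polygon_turning_bound (m : ℕ) (s h : ℕ → ℝ)
    (hs : ∀ i ≤ m, s i < s (i + 1))
    (hh : ∀ i ≤ m + 1, 0 < h i)
    (hconvex : ∀ k, 1 ≤ k → k ≤ m →
      hangle (Pt (s k) (h k)) (Pt (s (k - 1)) (h (k - 1))) (Pt (s (k + 1)) (h (k + 1))) =
        hangle (Pt (s k) (h k)) (Pt (s (k - 1)) (h (k - 1))) (Pt (s k) 0) +
        hangle (Pt (s k) (h k)) (Pt (s k) 0) (Pt (s (k + 1)) (h (k + 1)))) :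
    ∑ k ∈ Finset.Icc 1 m,
        (π - hangle (Pt (s k) (h k)) (Pt (s (k - 1)) (h (k - 1))) (Pt (s (k + 1)) (h (k + 1))))
      ≤ π + ∑ i ∈ Finset.range (m + 1),
          hdist (Pt (s i) (h i)) (Pt (s (i + 1)) (h (i + 1))) := by
  set T : ℕ → ℝ := fun i =>
    hangle (Pt (s i) (h i)) (Pt (s i) 0) (Pt (s (i+1)) (h (i+1))) with hT_def
  set F : ℕ → ℝ := fun i =>
    hangle (Pt (s (i+1)) (h (i+1))) (Pt (s i) (h i)) (Pt (s (i+1)) 0) with hF_def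
  set L : ℕ → ℝ := fun i =>
    hdist (Pt (s i) (h i)) (Pt (s (i+1)) (h (i+1))) with hL_def
  have hsym : ∀ p q r, hangle p q r = hangle p r q := by
    intro p q r
    rw [hangle, hangle]
    have e1 : mink q r = mink r q := by simp [mink]; ring
    rw [e1, mul_comm (mink p q) (mink p r),
      mul_comm (Real.sqrt (mink p q ^ 2 - 1)) (Real.sqrt (mink p r ^ 2 - 1))]
  have step1 : ∑ k ∈ Finset.Icc 1 m,
      (π - hangle (Pt (s k) (h k)) (Pt (s (k - 1)) (h (k - 1))) (Pt (s (k + 1)) (h (k + 1))))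
      = ∑ i ∈ Finset.range m, (π - F i - T (i+1)) := by
    rw [show Finset.Icc 1 m = Finset.Ico 1 (m+1) from by rw [Finset.Ico_add_one_right_eq_Icc],
      Finset.sum_Ico_eq_sum_range]
    simp only [Nat.add_sub_cancel]
    apply Finset.sum_congr rfl
    intro i hi
    have hi' : i < m := Finset.mem_range.1 hi
    rw [hconvex (1+i) (by omega) (by omega)]
    have e1 : 1 + i - 1 = i := by omega
    have e2 : 1 + i + 1 = i + 1 + 1 := by omega
    rw [e1, e2, show 1 + i = i + 1 by omega]
    rw [hT_def, hF_def]
    simp only []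
    rw [hsym (Pt (s (i+1)) (h (i+1))) (Pt (s i) (h i)) (Pt (s (i+1)) 0)]
    ring
  have step2 : ∑ i ∈ Finset.range (m+1), (π - T i - F i) ≤ ∑ i ∈ Finset.range (m+1), L i := by
    apply Finset.sum_le_sum
    intro i hi
    have hi' : i ≤ m := Nat.lt_succ_iff.1 (Finset.mem_range.1 hi)
    have := trap (s i) (s (i+1)) (h i) (h (i+1)) (hs i hi') (hh i (by omega)) (hh (i+1) (by omega))
    rw [hT_def, hF_def, hL_def]
    simpa using this
  have e4 : ∑ i ∈ Finset.range (m+1), (π - T i - F i)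
      = (∑ i ∈ Finset.range m, (π - T (i+1) - F (i+1))) + (π - T 0 - F 0) :=
    Finset.sum_range_succ' (fun i => π - T i - F i) m
  have e5 : ∑ i ∈ Finset.range m, (π - F i - T (i+1))
      = (∑ i ∈ Finset.range m, (π - T (i+1) - F (i+1))) + (F m - F 0) := by
    have : ∀ i ∈ Finset.range m, (π - F i - T (i+1))
        = (π - T (i+1) - F (i+1)) + (F (i+1) - F i) := fun i _ => by ring
    rw [Finset.sum_congr rfl this, Finset.sum_add_distrib, Finset.sum_range_sub F m]
  have hT0 : T 0 ≤ π := hangle_le_pi _ _ _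
  have hFm : F m ≤ π := hangle_le_pi _ _ _
  rw [step1]
  have hL : ∑ i ∈ Finset.range (m + 1), hdist (Pt (s i) (h i)) (Pt (s (i + 1)) (h (i + 1)))
      = ∑ i ∈ Finset.range (m+1), L i := rfl
  rw [hL]
  linarith [step2, e4, e5, hT0, hFm]
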